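/- arXiv:2211.08605 — 2 statements merged into one kernel-verified Lean document; each statement's English description precedes it below -/
import Mathlib

section
/- For every finite simple graph H, every orbit ψ of H, every finite simple graph G, and every vertex v of G, the orbit homomorphism count satisfies the inclusion-exclusion formula OrbitHom_{H,ψ}(v) = Σ_{S ∈ IS(ψ)} (−1)^{|S|+1} · VertexHom_{H_S, h_S}(v). -/
open scoped Classical

/-- `ψ` is an orbit of the vertices of `H` under its automorphism group. -/
def IsOrbit {V : Type*} (H : SimpleGraph V) (ψ : Finset V) : Prop :=
  ∃ h : V, ∀ u : V, u ∈ ψ ↔ ∃ σ : H ≃g H, σ h = u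

/-- `IS(ψ)`: the nonempty subsets of `ψ` that are independent sets in `H`. -/
noncomputable def indepSubsets {V : Type*} (H : SimpleGraph V) (ψ : Finset V) :
    Finset (Finset V) :=
  ψ.powerset.filter fun S => S.Nonempty ∧ ∀ a ∈ S, ∀ b ∈ S, ¬ H.Adj a b

/-- `H_S`: the graph obtained from `H` by merging all vertices of `S` into the single
new vertex `none` (playing the role of `h_S`), removing duplicate edges. -/
def mergeGraph {V : Type*} (H : SimpleGraph V) (S : Finset V) :
    SimpleGraph (Option {x : V // x ∉ S}) where
  Adj a b :=
    match a, b with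
    | none, none => False
    | none, some y => ∃ s ∈ S, H.Adj s y.1
    | some x, none => ∃ s ∈ S, H.Adj s x.1
    | some x, some y => H.Adj x.1 y.1
  symm := by
    constructor
    rintro (_ | x) (_ | y) hab
    · exact hab
    · exact hab
    · exact hab
    · exact hab.symm
  loopless := by
    constructor
    rintro (_ | x) hab
    · exact hab
    · exact H.loopless.irrefl x.1 hab

/-- `VertexHom_{H,h}(v)`: the number of homomorphisms from `H` to `G` mapping `h` to `v`. -/
noncomputable def vertexHom {V W : Type*} (H : SimpleGraph V) (G : SimpleGraph W)
    (h : V) (v : W) : ℕ :=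
  Nat.card {φ : H →g G // φ h = v}

/-- `OrbitHom_{H,ψ}(v)`: the number of homomorphisms from `H` to `G` mapping some
vertex of the orbit `ψ` to `v`. -/
noncomputable def orbitHom {V W : Type*} (H : SimpleGraph V) (G : SimpleGraph W)
    (ψ : Finset V) (v : W) : ℕ :=
  Nat.card {φ : H →g G // ∃ h ∈ ψ, φ h = v}

/-- `Hom(H,G)`: the total number of homomorphisms from `H` to `G`. -/
noncomputable def homCount {V W : Type*} (H : SimpleGraph V) (G : SimpleGraph W) : ℕ :=
  Nat.card (H →g G)

/-- A walk is induced if any two adjacent vertices on it are joined by an edge of the walk. -/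
def IsInducedWalk {V : Type*} (H : SimpleGraph V) {u w : V} (p : H.Walk u w) : Prop :=
  ∀ a ∈ p.support, ∀ b ∈ p.support, H.Adj a b → s(a, b) ∈ p.edges

/-- `LICL(H)`: the length of the longest induced cycle of `H` (0 if there is none). -/
noncomputable def LICL {V : Type*} (H : SimpleGraph V) : ℕ :=
  sSup {n | ∃ (u : V) (c : H.Walk u u), c.IsCycle ∧ IsInducedWalk H c ∧ c.length = n}

/-- `LIPCO(H)`: the length of the longest induced simple path between two vertices
`h, h'` of the same orbit of `H`, where `h` may equal `h'`, forming an induced cycle. -/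
noncomputable def LIPCO {V : Type*} (H : SimpleGraph V) : ℕ :=
  sSup ({n | ∃ (h h' : V) (p : H.Walk h h'), h ≠ h' ∧ (∃ σ : H ≃g H, σ h = h') ∧
          p.IsPath ∧ IsInducedWalk H p ∧ p.length = n} ∪
        {n | ∃ (h : V) (c : H.Walk h h), c.IsCycle ∧ IsInducedWalk H c ∧ c.length = n})

/-- An orientation of a simple graph `G`: each edge receives exactly one direction. -/
structure GraphOrientation {V : Type*} (G : SimpleGraph V) where
  rel : V → V → Prop
  consistent : ∀ u v, G.Adj u v ↔ (rel u v ∨ rel v u)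
  antisymm : ∀ u v, rel u v → ¬ rel v u

/-- An orientation is acyclic if the resulting digraph has no directed cycle. -/
def GraphOrientation.IsAcyclic {V : Type*} {G : SimpleGraph V} (O : GraphOrientation G) : Prop :=
  ∀ v : V, ¬ Relation.TransGen O.rel v v

/-- inclusion-exclusion formula expressing orbit homomorphism counts in
terms of vertex-centric homomorphism counts of the merged graphs `H_S`. -/
theorem orbitHom_eq_inclusion_exclusion {V W : Type*} [Fintype V] [Fintype W]
    (H : SimpleGraph V) (G : SimpleGraph W) (ψ : Finset V) (hψ : IsOrbit H ψ) (v : W) :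
    (orbitHom H G ψ v : ℤ) =
      ∑ S ∈ indepSubsets H ψ,
        (-1 : ℤ) ^ (S.card + 1) * (vertexHom (mergeGraph H S) G none v : ℤ) := by
  classical
  haveI : Finite (H →g G) := Finite.of_injective (fun φ => (φ : V → W)) DFunLike.coe_injective
  haveI : Fintype (H →g G) := Fintype.ofFinite _
  -- counting helper
  have hcard : ∀ (P : (H →g G) → Prop),
      (Nat.card {φ : H →g G // P φ} : ℤ) = ∑ φ : H →g G, if P φ then 1 else 0 := by
    intro P
    rw [Nat.card_eq_fintype_card, Fintype.card_subtype, Finset.card_filter]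
    push_cast
    rfl
  set f : Finset V → ℤ := fun S => (Nat.card {φ : H →g G // ∀ h ∈ S, φ h = v} : ℤ) with hfdef
  -- key bijection for independent sets
  have key : ∀ S ∈ indepSubsets H ψ,
      (vertexHom (mergeGraph H S) G none v : ℤ) = f S := by
    intro S hS
    simp only [indepSubsets, Finset.mem_filter, Finset.mem_powerset] at hS
    obtain ⟨hSψ, hne, hindep⟩ := hS
    unfold vertexHom
    simp only [hfdef]
    norm_cast
    apply Nat.card_congr
    refine
      { toFun := fun x => ⟨⟨fun a => if ha : a ∈ S then v else x.1 (some ⟨a, ha⟩), ?_⟩, ?_⟩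
        invFun := fun y => ⟨⟨fun o => Option.rec v (fun a => y.1 a.1) o, ?_⟩, rfl⟩
        left_inv := ?_
        right_inv := ?_ }
    · rintro a b hab
      by_cases ha : a ∈ S <;> by_cases hb : b ∈ S <;> simp only [ha, hb, dif_pos, dif_neg]
      · exact absurd hab (hindep a ha b hb)
      · have : (mergeGraph H S).Adj none (some ⟨b, hb⟩) := ⟨a, ha, hab⟩
        have := x.1.map_rel this
        rwa [x.2] at this
      · have : (mergeGraph H S).Adj (some ⟨a, ha⟩) none := ⟨b, hb, hab.symm⟩
        have := x.1.map_rel this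
        rwa [x.2] at this
      · exact x.1.map_rel hab
    · intro h hh
      exact dif_pos hh
    · rintro (_ | a) (_ | b) hab
      · exact absurd hab (fun h => h)
      · obtain ⟨s, hs, hadj⟩ := hab
        have := y.1.map_rel hadj
        rwa [y.2 s hs] at this
      · obtain ⟨s, hs, hadj⟩ := hab
        have := (y.1.map_rel hadj).symm
        rwa [y.2 s hs] at this
      · exact y.1.map_rel hab
    · rintro ⟨x, hx⟩
      ext o
      match o with
      | none => exact hx.symm
      | some ⟨a, ha⟩ => exact dif_neg ha
    · rintro ⟨y, hy⟩
      ext a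
      by_cases ha : a ∈ S
      · exact (dif_pos ha).trans (hy a ha).symm
      · exact dif_neg ha
  -- zero for non-independent nonempty subsets
  have hzero : ∀ S ∈ ψ.powerset.filter (fun S => S.Nonempty),
      S ∉ indepSubsets H ψ → (-1 : ℤ) ^ (S.card + 1) * f S = 0 := by
    intro S hS hnot
    simp only [Finset.mem_filter, Finset.mem_powerset] at hS
    simp only [indepSubsets, Finset.mem_filter, Finset.mem_powerset, not_and, not_forall] at hnot
    obtain ⟨a, ha, b, hb, hadj⟩ := by
      have := hnot hS.1 hS.2
      push_neg at this
      exact this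
    have : IsEmpty {φ : H →g G // ∀ h ∈ S, φ h = v} := by
      refine ⟨fun ⟨φ, hφ⟩ => ?_⟩
      have := φ.map_rel hadj
      rw [hφ a ha, hφ b hb] at this
      exact G.loopless.irrefl v this
    simp [hfdef, Nat.card_of_isEmpty]
  -- extend sum from independent sets to all nonempty subsets
  have step1 : ∑ S ∈ indepSubsets H ψ,
      (-1 : ℤ) ^ (S.card + 1) * (vertexHom (mergeGraph H S) G none v : ℤ)
      = ∑ S ∈ ψ.powerset.filter (fun S => S.Nonempty), (-1 : ℤ) ^ (S.card + 1) * f S := by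
    rw [Finset.sum_congr rfl (fun S hS => by rw [key S hS])]
    refine Finset.sum_subset ?_ hzero
    intro S hS
    simp only [indepSubsets, Finset.mem_filter, Finset.mem_powerset] at hS ⊢
    exact ⟨hS.1, hS.2.1⟩
  rw [step1]
  symm
  -- double counting
  have step2 : ∀ S : Finset V, f S = ∑ φ : H →g G, if ∀ h ∈ S, φ h = v then (1 : ℤ) else 0 :=
    fun S => by rw [hfdef]; exact (hcard _).trans (Finset.sum_congr rfl fun φ _ => by congr)
  calc ∑ S ∈ ψ.powerset.filter (fun S => S.Nonempty), (-1 : ℤ) ^ (S.card + 1) * f S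
      = ∑ S ∈ ψ.powerset.filter (fun S => S.Nonempty), ∑ φ : H →g G,
          (-1 : ℤ) ^ (S.card + 1) * (if ∀ h ∈ S, φ h = v then 1 else 0) := by
        refine Finset.sum_congr rfl fun S _ => ?_
        rw [step2 S, Finset.mul_sum]
    _ = ∑ φ : H →g G, ∑ S ∈ ψ.powerset.filter (fun S => S.Nonempty),
          (-1 : ℤ) ^ (S.card + 1) * (if ∀ h ∈ S, φ h = v then 1 else 0) := Finset.sum_comm
    _ = ∑ φ : H →g G, (if ∃ h ∈ ψ, φ h = v then (1 : ℤ) else 0) := by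
        refine Finset.sum_congr rfl fun φ _ => ?_
        set T : Finset V := ψ.filter (fun h => φ h = v) with hT
        have hsub : ∀ S ∈ ψ.powerset.filter (fun S => S.Nonempty),
            ((∀ h ∈ S, φ h = v) ↔ S ⊆ T) := by
          intro S hS
          simp only [Finset.mem_filter, Finset.mem_powerset] at hS
          constructor
          · intro hall x hx
            exact Finset.mem_filter.2 ⟨hS.1 hx, hall x hx⟩
          · intro hsub x hx
            exact (Finset.mem_filter.1 (hsub hx)).2
        rw [Finset.sum_congr rfl (fun S hS => by rw [if_congr (hsub S hS) rfl rfl])]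
        have hTsub : T ⊆ ψ := Finset.filter_subset _ _
        have h1 : ∑ S ∈ ψ.powerset.filter (fun S => S.Nonempty),
            (-1 : ℤ) ^ (S.card + 1) * (if S ⊆ T then 1 else 0)
            = ∑ S ∈ T.powerset.filter (fun S => S.Nonempty), (-1 : ℤ) ^ (S.card + 1) := by
          simp only [mul_ite, mul_one, mul_zero]
          rw [← Finset.sum_filter]
          congr 1
          ext S
          simp only [Finset.mem_filter, Finset.mem_powerset]
          constructor
          · rintro ⟨⟨_, hne⟩, hst⟩; exact ⟨hst, hne⟩
          · rintro ⟨hst, hne⟩; exact ⟨⟨hst.trans hTsub, hne⟩, hst⟩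
        rw [h1]
        have h2 : T.powerset = insert ∅ (T.powerset.filter (fun S => S.Nonempty)) := by
          ext S
          simp only [Finset.mem_insert, Finset.mem_filter, Finset.mem_powerset]
          constructor
          · intro hst
            rcases S.eq_empty_or_nonempty with h | h
            · exact Or.inl h
            · exact Or.inr ⟨hst, h⟩
          · rintro (rfl | ⟨hst, _⟩)
            · exact Finset.empty_subset _
            · exact hst
        have h4 := Finset.sum_powerset_neg_one_pow_card (x := T)
        rw [h2, Finset.sum_insert (by simp)] at h4
        have h3 : ∑ S ∈ T.powerset.filter (fun S => S.Nonempty), (-1 : ℤ) ^ S.card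
            = (if T = ∅ then 1 else 0) - 1 := by
          simp only [Finset.card_empty, pow_zero] at h4
          linarith
        have h5 : ∑ S ∈ T.powerset.filter (fun S => S.Nonempty), (-1 : ℤ) ^ (S.card + 1)
            = 1 - (if T = ∅ then 1 else 0) := by
          have : ∀ n : ℕ, (-1 : ℤ) ^ (n + 1) = -((-1 : ℤ) ^ n) := fun n => by ring
          simp only [this]
          rw [Finset.sum_neg_distrib, h3]
          ring
        rw [h5]
        by_cases hex : ∃ h ∈ ψ, φ h = v
        · have hTne : T ≠ ∅ :=
            Finset.nonempty_iff_ne_empty.1 (Finset.filter_nonempty_iff.2 hex)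
          simp [hex, hTne]
        · have hTe : T = ∅ := by
            rw [← Finset.not_nonempty_iff_eq_empty, Finset.filter_nonempty_iff]
            exact hex
          simp [hex, hTe]
    _ = (orbitHom H G ψ v : ℤ) := by
        rw [orbitHom]
        exact (Finset.sum_congr rfl fun φ _ => by congr).trans (hcard _).symm
end

section
/- For every finite simple graph H, every orbit ψ of H, and every finite simple graph G, the aggregate orbit count satisfies Agg(H,G,ψ) := Σ_{v ∈ V(G)} OrbitHom_{H,ψ}(v) = Σ_{S ∈ IS(ψ)} (−1)^{|S|+1} · Hom(H_S, G). -/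
open scoped Classical

section Aux

variable {V W : Type*} [Fintype V] [Fintype W] {H : SimpleGraph V} {G : SimpleGraph W}

noncomputable instance homFintype : Fintype (H →g G) :=
  Fintype.ofInjective (fun φ => (φ : V → W)) DFunLike.coe_injective

/-- Homomorphisms out of the merged graph correspond to homomorphisms out of `H`
that are constant on `S`. -/
noncomputable def mergeEquiv (H : SimpleGraph V) (G : SimpleGraph W) (S : Finset V)
    (s₀ : V) (hs₀ : s₀ ∈ S) (hind : ∀ a ∈ S, ∀ b ∈ S, ¬ H.Adj a b) :
    (mergeGraph H S →g G) ≃ {φ : H →g G // ∀ a ∈ S, ∀ b ∈ S, φ a = φ b} where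
  toFun ρ := ⟨⟨fun x => if h : x ∈ S then ρ none else ρ (some ⟨x, h⟩), by
      intro u v huv
      by_cases hu : u ∈ S <;> by_cases hv : v ∈ S
      · exact absurd huv (hind u hu v hv)
      · simp only [dif_pos hu, dif_neg hv]
        exact ρ.map_rel (show (mergeGraph H S).Adj none (some ⟨v, hv⟩) from ⟨u, hu, huv⟩)
      · simp only [dif_neg hu, dif_pos hv]
        exact ρ.map_rel (show (mergeGraph H S).Adj (some ⟨u, hu⟩) none from ⟨v, hv, huv.symm⟩)
      · simp only [dif_neg hu, dif_neg hv]
        exact ρ.map_rel (show (mergeGraph H S).Adj (some ⟨u, hu⟩) (some ⟨v, hv⟩) from huv)⟩,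
    by
      intro a ha b hb
      show (if h : a ∈ S then ρ none else ρ (some ⟨a, h⟩))
          = (if h : b ∈ S then ρ none else ρ (some ⟨b, h⟩))
      rw [dif_pos ha, dif_pos hb]⟩
  invFun φ := ⟨fun x => match x with
      | none => φ.1 s₀
      | some y => φ.1 y.1, by
      rintro (_ | x) (_ | y) hxy
      · exact hxy.elim
      · obtain ⟨s, hs, hadj⟩ := hxy
        have := φ.1.map_rel hadj
        rwa [← φ.2 s₀ hs₀ s hs] at this
      · obtain ⟨s, hs, hadj⟩ := hxy
        have := (φ.1.map_rel hadj).symm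
        rwa [← φ.2 s₀ hs₀ s hs] at this
      · exact φ.1.map_rel hxy⟩
  left_inv ρ := by
    ext x
    match x with
    | none => exact dif_pos hs₀
    | some y => exact dif_neg y.2
  right_inv φ := by
    apply Subtype.ext
    ext x
    by_cases hx : x ∈ S
    · exact (dif_pos hx).trans (φ.2 s₀ hs₀ x hx)
    · exact dif_neg hx

lemma homCount_merge {S : Finset V} (hne : S.Nonempty)
    (hind : ∀ a ∈ S, ∀ b ∈ S, ¬ H.Adj a b) :
    homCount (mergeGraph H S) G =
      (Finset.univ.filter fun φ : H →g G => ∀ a ∈ S, ∀ b ∈ S, φ a = φ b).card := by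
  obtain ⟨s₀, hs₀⟩ := hne
  rw [homCount, Nat.card_congr (mergeEquiv H G S s₀ hs₀ hind),
    Nat.card_eq_fintype_card, Fintype.card_subtype]

lemma aux_inner_sum {α : Type*} (T : Finset α) (hT : T.Nonempty) :
    ∑ S ∈ T.powerset.filter Finset.Nonempty, (-1 : ℤ) ^ (S.card + 1) = 1 := by
  classical
  have h0 : (∑ S ∈ T.powerset, (-1 : ℤ) ^ S.card) = 0 :=
    Finset.sum_powerset_neg_one_pow_card_of_nonempty hT
  have hsplit : T.powerset.filter Finset.Nonempty = T.powerset.erase ∅ := by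
    ext S
    simp [Finset.nonempty_iff_ne_empty, and_comm]
  have hmem : (∅ : Finset α) ∈ T.powerset := Finset.empty_mem_powerset T
  have h1 : (∑ S ∈ T.powerset.erase ∅, (-1 : ℤ) ^ S.card) = -1 := by
    have h2 := Finset.add_sum_erase _ (fun S : Finset α => (-1 : ℤ) ^ S.card) hmem
    rw [h0] at h2
    simp only [Finset.card_empty, pow_zero] at h2
    linarith
  rw [hsplit]
  calc (∑ S ∈ T.powerset.erase ∅, (-1 : ℤ) ^ (S.card + 1))
      = ∑ S ∈ T.powerset.erase ∅, (-1 : ℤ) ^ S.card * (-1) := by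
        simp [pow_succ]
    _ = -1 * (-1) := by rw [← Finset.sum_mul, h1]
    _ = 1 := by ring

lemma per_phi (H : SimpleGraph V) (G : SimpleGraph W) (ψ : Finset V) (φ : H →g G) :
    (∑ S ∈ indepSubsets H ψ,
        (-1 : ℤ) ^ (S.card + 1) * (if ∀ a ∈ S, ∀ b ∈ S, φ a = φ b then 1 else 0))
      = ((ψ.image φ).card : ℤ) := by
  classical
  simp only [mul_ite, mul_one, mul_zero]
  rw [← Finset.sum_filter]
  have hfilter : (indepSubsets H ψ).filter (fun S => ∀ a ∈ S, ∀ b ∈ S, φ a = φ b)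
      = (ψ.image φ).biUnion
          (fun v => (ψ.filter fun h => φ h = v).powerset.filter Finset.Nonempty) := by
    ext S
    simp only [indepSubsets, Finset.mem_filter, Finset.mem_powerset,
      Finset.mem_biUnion, Finset.mem_image]
    constructor
    · rintro ⟨⟨hsub, hne, hind⟩, hconst⟩
      obtain ⟨h₀, hh₀⟩ := hne
      refine ⟨φ h₀, ⟨h₀, hsub hh₀, rfl⟩, ?_, ⟨h₀, hh₀⟩⟩
      intro a ha
      exact Finset.mem_filter.mpr ⟨hsub ha, hconst a ha h₀ hh₀⟩
    · rintro ⟨v, _, hsub, hne⟩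
      have hsub' : S ⊆ ψ := fun a ha => (Finset.mem_filter.mp (hsub ha)).1
      have hconst : ∀ a ∈ S, ∀ b ∈ S, φ a = φ b := fun a ha b hb => by
        rw [(Finset.mem_filter.mp (hsub ha)).2, (Finset.mem_filter.mp (hsub hb)).2]
      refine ⟨⟨hsub', hne, ?_⟩, hconst⟩
      intro a ha b hb hadj
      have := φ.map_rel hadj
      rw [hconst a ha b hb] at this
      exact G.loopless.irrefl _ this
  have hdisj : (↑(ψ.image φ) : Set W).PairwiseDisjoint
      (fun v => (ψ.filter fun h => φ h = v).powerset.filter Finset.Nonempty) := by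
    intro v _ w _ hvw
    refine Finset.disjoint_left.mpr fun S hSv hSw => ?_
    obtain ⟨hpv, hnev⟩ := Finset.mem_filter.mp hSv
    obtain ⟨hpw, _⟩ := Finset.mem_filter.mp hSw
    obtain ⟨a, ha⟩ := hnev
    have h1 := (Finset.mem_filter.mp (Finset.mem_powerset.mp hpv ha)).2
    have h2 := (Finset.mem_filter.mp (Finset.mem_powerset.mp hpw ha)).2
    exact hvw (h1 ▸ h2)
  rw [hfilter, Finset.sum_biUnion hdisj]
  have hone : ∀ v ∈ ψ.image φ,
      (∑ S ∈ (ψ.filter fun h => φ h = v).powerset.filter Finset.Nonempty,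
        (-1 : ℤ) ^ (S.card + 1)) = 1 := by
    intro v hv
    obtain ⟨h, hh, rfl⟩ := Finset.mem_image.mp hv
    exact aux_inner_sum _ ⟨h, Finset.mem_filter.mpr ⟨hh, rfl⟩⟩
  rw [Finset.sum_congr rfl hone]
  simp

end Aux

/-- the aggregate orbit count `Agg(H,G,ψ) = Σ_v OrbitHom_{H,ψ}(v)` is the
signed sum of the total homomorphism counts of the merged patterns `H_S`. -/
theorem agg_eq_signed_sum_homCounts {V W : Type*} [Fintype V] [Fintype W]
    (H : SimpleGraph V) (G : SimpleGraph W) (ψ : Finset V) (hψ : IsOrbit H ψ) :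
    (∑ v : W, (orbitHom H G ψ v : ℤ)) =
      ∑ S ∈ indepSubsets H ψ,
        (-1 : ℤ) ^ (S.card + 1) * (homCount (mergeGraph H S) G : ℤ) := by
  classical
  have hL : (∑ v : W, (orbitHom H G ψ v : ℤ)) = ∑ φ : H →g G, ((ψ.image φ).card : ℤ) := by
    have h1 : ∀ v : W, orbitHom H G ψ v
        = ∑ φ : H →g G, if ∃ h ∈ ψ, φ h = v then 1 else 0 := fun v => by
      rw [orbitHom, Nat.card_eq_fintype_card, Fintype.card_subtype, Finset.card_filter]
    have h2 : (∑ v : W, orbitHom H G ψ v) = ∑ φ : H →g G, (ψ.image φ).card := by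
      simp only [h1]
      rw [Finset.sum_comm]
      refine Finset.sum_congr rfl fun φ _ => ?_
      rw [← Finset.card_filter]
      congr 1
      ext v
      simp [Finset.mem_image, eq_comm]
    rw [← Nat.cast_sum, h2, Nat.cast_sum]
  rw [hL]
  have hR : ∀ S ∈ indepSubsets H ψ, (-1 : ℤ) ^ (S.card + 1) * (homCount (mergeGraph H S) G : ℤ)
      = ∑ φ : H →g G, (-1 : ℤ) ^ (S.card + 1) * (if ∀ a ∈ S, ∀ b ∈ S, φ a = φ b then 1 else 0) := by
    intro S hS
    simp only [indepSubsets, Finset.mem_filter, Finset.mem_powerset] at hS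
    obtain ⟨hsub, hne, hind⟩ := hS
    rw [homCount_merge hne hind, Finset.card_filter]
    push_cast
    rw [Finset.mul_sum]
  rw [Finset.sum_congr rfl hR, Finset.sum_comm]
  exact (Finset.sum_congr rfl fun φ _ => per_phi H G ψ φ).symm
end
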